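/- Let t0 ≠ 0 and let λ be meromorphic at t0 with a simple pole at t0 of residue e·t0 (e² = 1), solving the Painlevé III' equation with parameters χ0, χ∞ on a punctured neighborhood of t0. Then the limit of λ(t) − e·t0/(t−t0) as t → t0 equals (e + χ∞)/2. -/

import Mathlib

set_option maxHeartbeats 1000000

lemma aux16 (u t t0 e H H1 H2 xi x0 : ℂ) (htu : t = t0 + u) (hu : u ≠ 0) (ht : t ≠ 0)
    (hN : e * t0 + u * H ≠ 0) (he : e ^ 2 = 1)
    (hE : e * t0 * (2 / u ^ 3) + H2 =
      (e * t0 * (-1 / u ^ 2) + H1) ^ 2 / ((e * t0 + u * H) / u)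
        - (e * t0 * (-1 / u ^ 2) + H1) / t
        - xi * ((e * t0 + u * H) / u) ^ 2 / t ^ 2
        + ((e * t0 + u * H) / u) ^ 3 / t ^ 2
        + x0 / t - 1 / ((e * t0 + u * H) / u)) :
    t0 ^ 3 + t0 ^ 3 * e * xi - 2 * t0 ^ 3 * e * H
    + u * (3 * t0 ^ 2 * H * xi - 6 * t0 ^ 2 * H ^ 2 + 3 * t0 ^ 2 * e * H + 2 * t0 ^ 3 * e * H1)
    + u ^ 2 * (t0 * e * H + 3 * t0 * e * H ^ 2 * xi - 4 * t0 * e * H ^ 3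
        - t0 ^ 2 * e * x0 + 5 * t0 ^ 2 * e * H1 + t0 ^ 3 * e * H2)
    + u ^ 3 * (H ^ 3 * xi - H ^ 4 - t0 * H * x0 + t0 * H * H1
        - t0 * e * x0 + 3 * t0 * e * H1 + t0 ^ 2 - t0 ^ 2 * H1 ^ 2
        + t0 ^ 2 * H * H2 + 2 * t0 ^ 2 * e * H2)
    + u ^ 4 * (-(H * x0) + H * H1 + 2 * t0 - 2 * t0 * H1 ^ 2
        + 2 * t0 * H * H2 + t0 * e * H2)
    + u ^ 5 * (1 - H1 ^ 2 + H * H2) = 0 := by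
  subst htu
  set N := e * t0 + u * H with hNdef
  set D := u ^ 3 * (t0 + u) ^ 2 * N with hDdef
  have t1 : (e * t0 * (2 / u ^ 3) + H2) * D
      = (2 * (e * t0) + u ^ 3 * H2) * ((t0 + u) ^ 2 * N) := by
    rw [hDdef]; field_simp
  have t2 : ((e * t0 * (-1 / u ^ 2) + H1) ^ 2 / (N / u)) * D
      = (-(e * t0) + u ^ 2 * H1) ^ 2 * (t0 + u) ^ 2 := by
    rw [div_div_eq_mul_div, hDdef]; field_simp
  have t3 : ((e * t0 * (-1 / u ^ 2) + H1) / (t0 + u)) * D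
      = (-(e * t0) + u ^ 2 * H1) * u * (t0 + u) * N := by
    rw [hDdef]; field_simp
  have t4 : (xi * (N / u) ^ 2 / (t0 + u) ^ 2) * D = xi * N ^ 3 * u := by
    rw [hDdef]; field_simp
  have t5 : ((N / u) ^ 3 / (t0 + u) ^ 2) * D = N ^ 4 := by
    rw [hDdef]; field_simp
  have t6 : (x0 / (t0 + u)) * D = x0 * u ^ 3 * (t0 + u) * N := by
    rw [hDdef]; field_simp
  have t7 : (1 / (N / u)) * D = u ^ 4 * (t0 + u) ^ 2 := by
    rw [one_div_div, hDdef]; field_simp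
  have hP : (2 * (e * t0) + u ^ 3 * H2) * ((t0 + u) ^ 2 * N)
      = (-(e * t0) + u ^ 2 * H1) ^ 2 * (t0 + u) ^ 2
        - (-(e * t0) + u ^ 2 * H1) * u * (t0 + u) * N
        - xi * N ^ 3 * u + N ^ 4 + x0 * u ^ 3 * (t0 + u) * N
        - u ^ 4 * (t0 + u) ^ 2 := by
    rw [← t1, ← t2, ← t3, ← t4, ← t5, ← t6, ← t7, hE]
    simp only [sub_mul, add_mul]
  have key : u * (t0 ^ 3 + t0 ^ 3 * e * xi - 2 * t0 ^ 3 * e * H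
    + u * (3 * t0 ^ 2 * H * xi - 6 * t0 ^ 2 * H ^ 2 + 3 * t0 ^ 2 * e * H + 2 * t0 ^ 3 * e * H1)
    + u ^ 2 * (t0 * e * H + 3 * t0 * e * H ^ 2 * xi - 4 * t0 * e * H ^ 3
        - t0 ^ 2 * e * x0 + 5 * t0 ^ 2 * e * H1 + t0 ^ 3 * e * H2)
    + u ^ 3 * (H ^ 3 * xi - H ^ 4 - t0 * H * x0 + t0 * H * H1
        - t0 * e * x0 + 3 * t0 * e * H1 + t0 ^ 2 - t0 ^ 2 * H1 ^ 2
        + t0 ^ 2 * H * H2 + 2 * t0 ^ 2 * e * H2)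
    + u ^ 4 * (-(H * x0) + H * H1 + 2 * t0 - 2 * t0 * H1 ^ 2
        + 2 * t0 * H * H2 + t0 * e * H2)
    + u ^ 5 * (1 - H1 ^ 2 + H * H2)) = 0 := by
    rw [hNdef] at hP
    linear_combination hP + (t0 ^ 4 * e ^ 2 - u * t0 ^ 3 * (1 + e * xi - 4 * e * H)
      - 3 * u ^ 2 * t0 ^ 2 * (H * xi - 2 * H ^ 2)) * he
  exact mul_left_cancel₀ hu (by rw [key, mul_zero])

/-- The Painlevé III' equation with parameters `χ0`, `χ∞`, stated at a point `t`. -/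
def PIIIp (χ0 χinf : ℂ) (l : ℂ → ℂ) (t : ℂ) : Prop :=
  deriv (deriv l) t =
    (deriv l t) ^ 2 / l t - deriv l t / t - χinf * (l t) ^ 2 / t ^ 2
      + (l t) ^ 3 / t ^ 2 + χ0 / t - 1 / l t

/-- At a simple pole `t0` with residue `e·t0` (`e² = 1`) of a third Painlevé
transcendent, the constant term of the Laurent expansion equals `(e + χ∞)/2`. -/
theorem stmt16 (t0 χ0 χinf e : ℂ) (ht0 : t0 ≠ 0) (he : e ^ 2 = 1)
    (l h : ℂ → ℂ) (hh : AnalyticAt ℂ h t0)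
    (hrep : ∀ᶠ t in nhdsWithin t0 {t0}ᶜ, l t = e * t0 / (t - t0) + h t)
    (heq : ∀ᶠ t in nhdsWithin t0 {t0}ᶜ, l t ≠ 0 → PIIIp χ0 χinf l t) :
    Filter.Tendsto (fun t => l t - e * t0 / (t - t0)) (nhdsWithin t0 {t0}ᶜ)
      (nhds ((e + χinf) / 2)) := by
  have he0 : e ≠ 0 := by
    intro h0; rw [h0] at he; norm_num at he
  obtain ⟨U, hUo, hU0, hUsub⟩ := mem_nhdsWithin.mp hrep
  set A := {x : ℂ | AnalyticAt ℂ h x} with hAdef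
  have hAo : IsOpen A := isOpen_analyticAt ℂ h
  have hAnhd : AnalyticOnNhd ℂ h A := fun x hx => hx
  have hA1 : AnalyticOnNhd ℂ (deriv h) A := hAnhd.deriv
  have hA2 : AnalyticOnNhd ℂ (deriv (deriv h)) A := hA1.deriv
  set W := (U ∩ A) ∩ {t0}ᶜ with hWdef
  have hWo : IsOpen W := (hUo.inter hAo).inter isOpen_compl_singleton
  have hWmem : W ∈ nhdsWithin t0 {t0}ᶜ :=
    mem_nhdsWithin.mpr ⟨U ∩ A, hUo.inter hAo, ⟨hU0, hh⟩, fun x hx => ⟨hx.1, hx.2⟩⟩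
  have hrepW : ∀ s ∈ W, l s = e * t0 / (s - t0) + h s := fun s hs => hUsub ⟨hs.1.1, hs.2⟩
  -- first derivative on W
  have claim1 : ∀ s ∈ W, HasDerivAt l (e * t0 * (-1 / (s - t0) ^ 2) + deriv h s) s := by
    intro s hs
    have hsne : s ≠ t0 := hs.2
    have hsub : s - t0 ≠ 0 := sub_ne_zero.mpr hsne
    have h1 : HasDerivAt (fun x : ℂ => x - t0) 1 s := (hasDerivAt_id s).sub_const t0
    have h2 := h1.inv hsub
    have h3 := h2.const_mul (e * t0)
    have hpole : HasDerivAt (fun x : ℂ => e * t0 / (x - t0)) (e * t0 * (-1 / (s - t0) ^ 2)) s := by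
      have hfun : (fun x : ℂ => e * t0 * (x - t0)⁻¹) = fun x : ℂ => e * t0 / (x - t0) := by
        funext x; rw [div_eq_mul_inv]
      rw [← hfun]
      exact h3
    have hh' : HasDerivAt h (deriv h s) s := hs.1.2.differentiableAt.hasDerivAt
    have := hpole.add hh'
    exact this.congr_of_eventuallyEq
      (Filter.eventuallyEq_of_mem (hWo.mem_nhds hs) (fun x hx => hrepW x hx))
  have claim1' : ∀ s ∈ W, deriv l s = e * t0 * (-1 / (s - t0) ^ 2) + deriv h s :=
    fun s hs => (claim1 s hs).deriv
  -- second derivative on W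
  have claim2 : ∀ s ∈ W,
      deriv (deriv l) s = e * t0 * (2 / (s - t0) ^ 3) + deriv (deriv h) s := by
    intro s hs
    have hsne : s ≠ t0 := hs.2
    have hsub : s - t0 ≠ 0 := sub_ne_zero.mpr hsne
    have h1 : HasDerivAt (fun x : ℂ => x - t0) 1 s := (hasDerivAt_id s).sub_const t0
    have h2 : HasDerivAt (fun x : ℂ => (x - t0) ^ 2) (2 * (s - t0) ^ 1 * 1) s := h1.pow 2
    have h3 := h2.inv (pow_ne_zero 2 hsub)
    have h4 := h3.const_mul (-(e * t0))
    have hpole : HasDerivAt (fun x : ℂ => e * t0 * (-1 / (x - t0) ^ 2))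
        (e * t0 * (2 / (s - t0) ^ 3)) s := by
      have hfun : (fun x : ℂ => -(e * t0) * ((x - t0) ^ 2)⁻¹)
          = fun x : ℂ => e * t0 * (-1 / (x - t0) ^ 2) := by
        funext x; field_simp
      rw [← hfun]
      exact h4.congr_deriv (by field_simp)
    have hh2 : HasDerivAt (deriv h) (deriv (deriv h) s) s :=
      (hA1 s hs.1.2).differentiableAt.hasDerivAt
    have hd1 := hpole.add hh2
    have hev1 : deriv l =ᶠ[nhds s] fun x => e * t0 * (-1 / (x - t0) ^ 2) + deriv h x :=
      Filter.eventuallyEq_of_mem (hWo.mem_nhds hs) (fun x hx => claim1' x hx)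
    exact (hd1.congr_of_eventuallyEq hev1).deriv
  -- the key polynomial
  set Q : ℂ → ℂ := fun t =>
    t0 ^ 3 + t0 ^ 3 * e * χinf - 2 * t0 ^ 3 * e * h t
    + (t - t0) * (3 * t0 ^ 2 * h t * χinf - 6 * t0 ^ 2 * (h t) ^ 2 + 3 * t0 ^ 2 * e * h t
        + 2 * t0 ^ 3 * e * deriv h t)
    + (t - t0) ^ 2 * (t0 * e * h t + 3 * t0 * e * (h t) ^ 2 * χinf - 4 * t0 * e * (h t) ^ 3
        - t0 ^ 2 * e * χ0 + 5 * t0 ^ 2 * e * deriv h t + t0 ^ 3 * e * deriv (deriv h) t)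
    + (t - t0) ^ 3 * ((h t) ^ 3 * χinf - (h t) ^ 4 - t0 * h t * χ0 + t0 * h t * deriv h t
        - t0 * e * χ0 + 3 * t0 * e * deriv h t + t0 ^ 2 - t0 ^ 2 * (deriv h t) ^ 2
        + t0 ^ 2 * h t * deriv (deriv h) t + 2 * t0 ^ 2 * e * deriv (deriv h) t)
    + (t - t0) ^ 4 * (-(h t * χ0) + h t * deriv h t + 2 * t0 - 2 * t0 * (deriv h t) ^ 2
        + 2 * t0 * h t * deriv (deriv h) t + t0 * e * deriv (deriv h) t)
    + (t - t0) ^ 5 * (1 - (deriv h t) ^ 2 + h t * deriv (deriv h) t) with hQdef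
  have hQ0 : ∀ᶠ t in nhdsWithin t0 {t0}ᶜ, Q t = 0 := by
    have hne0' : ∀ᶠ t in nhdsWithin t0 {t0}ᶜ, t ≠ 0 :=
      (eventually_ne_nhds ht0).filter_mono nhdsWithin_le_nhds
    have hnum : ∀ᶠ t in nhdsWithin t0 {t0}ᶜ, e * t0 + (t - t0) * h t ≠ 0 := by
      have hcont : ContinuousAt (fun t => e * t0 + (t - t0) * h t) t0 :=
        continuousAt_const.add ((continuousAt_id.sub continuousAt_const).mul hh.continuousAt)
      have hval : (fun t => e * t0 + (t - t0) * h t) t0 ≠ 0 := by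
        simp [mul_ne_zero he0 ht0]
      exact (hcont.eventually_ne hval).filter_mono nhdsWithin_le_nhds
    filter_upwards [hWmem, heq, hne0', hnum] with t htW hPIII htne hnumt
    have htne0 : t ≠ t0 := htW.2
    have hu : t - t0 ≠ 0 := sub_ne_zero.mpr htne0
    have hl' : l t = (e * t0 + (t - t0) * h t) / (t - t0) := by
      rw [hrepW t htW]; field_simp
    have hlne : l t ≠ 0 := by rw [hl']; exact div_ne_zero hnumt hu
    have hE := hPIII hlne
    unfold PIIIp at hE
    rw [claim2 t htW, claim1' t htW, hl'] at hE
    exact aux16 (t - t0) t t0 e (h t) (deriv h t) (deriv (deriv h) t) χinf χ0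
      (by ring) hu htne hnumt he hE
  -- take the limit
  have hc1 : ContinuousAt h t0 := hh.continuousAt
  have hc2 : ContinuousAt (deriv h) t0 := (hA1 t0 hh).continuousAt
  have hc3 : ContinuousAt (deriv (deriv h)) t0 := (hA2 t0 hh).continuousAt
  have hQcont : ContinuousAt Q t0 := by
    rw [hQdef]
    fun_prop
  have hQt0 : Q t0 = 0 := by
    have l1 : Filter.Tendsto Q (nhdsWithin t0 {t0}ᶜ) (nhds (Q t0)) :=
      (hQcont.continuousWithinAt : ContinuousWithinAt Q {t0}ᶜ t0)
    have l2 : Filter.Tendsto Q (nhdsWithin t0 {t0}ᶜ) (nhds 0) :=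
      Filter.Tendsto.congr' (Filter.EventuallyEq.symm hQ0) tendsto_const_nhds
    exact tendsto_nhds_unique l1 l2
  have hQval : Q t0 = t0 ^ 3 + t0 ^ 3 * e * χinf - 2 * t0 ^ 3 * e * h t0 := by
    rw [hQdef]; simp
  have h2 : t0 ^ 3 + t0 ^ 3 * e * χinf - 2 * t0 ^ 3 * e * h t0 = 0 := by
    rw [← hQval]; exact hQt0
  have h1 : t0 ^ 3 * (1 + e * χinf - 2 * e * h t0) = 0 := by linear_combination h2
  have h3 : 1 + e * χinf - 2 * e * h t0 = 0 := by
    rcases mul_eq_zero.mp h1 with hx | hx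
    · exact absurd hx (pow_ne_zero 3 ht0)
    · exact hx
  have h4 : 2 * h t0 = e + χinf := by
    linear_combination (-e) * h3 + (χinf - 2 * h t0) * he
  have hval : h t0 = (e + χinf) / 2 := by linear_combination h4 / 2
  have hfin : ∀ᶠ t in nhdsWithin t0 {t0}ᶜ, h t = l t - e * t0 / (t - t0) :=
    hrep.mono fun t ht => by rw [ht]; ring
  have hht : Filter.Tendsto h (nhdsWithin t0 {t0}ᶜ) (nhds ((e + χinf) / 2)) := by
    rw [← hval]
    exact (hc1.continuousWithinAt : ContinuousWithinAt h {t0}ᶜ t0)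
  exact Filter.Tendsto.congr' hfin hht
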